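/- Let G be a finite group, 𝓕 a family of subgroups closed under conjugation and taking subgroups, R a commutative ring with 1, and N a normal subgroup of G with N ∈ 𝓕. Let X be a finite G/N-set all of whose isotropy groups lie in 𝓕_{G/N}. Then Inf^G_{G/N} R[X] ≅ R[Inf^G_{G/N} X] as RΓ_G-modules, where Inf^G_{G/N} X denotes X regarded as a G-set via the quotient map G → G/N. -/

import Mathlib

open CategoryTheory CategoryTheory.Limits Opposite

/-! Core: orbit category over a family of subgroups, modules over it,
chain complexes, dimension functions, homology spheres. -/

/-- The conjugate subgroup `g K g⁻¹`. -/
def conjSub {G : Type} [Group G] (g : G) (K : Subgroup G) : Subgroup G :=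
  K.map (MulAut.conj g).toMonoidHom

/-- A family of subgroups of `G`, closed under conjugation and under taking subgroups. -/
structure SubgroupFamily (G : Type) [Group G] : Type where
  mem : Subgroup G → Prop
  conj_mem : ∀ (g : G) (K : Subgroup G), mem K → mem (conjSub g K)
  le_mem : ∀ (H K : Subgroup G), H ≤ K → mem K → mem H

/-- `(H) ≤ (K)` : some conjugate of `H` is contained in `K`, i.e. `g⁻¹ H g ≤ K` for some `g`. -/
def ConjLE {G : Type} [Group G] (H K : Subgroup G) : Prop := ∃ g : G, H ≤ conjSub g K

/-- A conjugation-invariant (super class) function. -/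
def ConjInv {G : Type} [Group G] (n : Subgroup G → ℤ) : Prop :=
  ∀ (g : G) (K : Subgroup G), n (conjSub g K) = n K

/-- Monotone super class function: `n(H) ≥ n(K)` whenever `(H) ≤ (K)`. -/
def MonotoneConj {G : Type} [Group G] (n : Subgroup G → ℤ) : Prop :=
  ∀ H K : Subgroup G, ConjLE H K → n K ≤ n H

/-- Objects of the orbit category `Or_𝓕 G`: orbits `G/K` with `K ∈ 𝓕`. -/
def OrbitObj {G : Type} [Group G] (F : SubgroupFamily G) : Type := {K : Subgroup G // F.mem K}

/-- The orbit category: morphisms `G/K → G/L` are the `G`-equivariant maps. -/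
instance {G : Type} [Group G] (F : SubgroupFamily G) : Category (OrbitObj F) where
  Hom K L := (G ⧸ K.1) →[G] (G ⧸ L.1)
  id K := MulActionHom.id G
  comp f g := g.comp f

/-- The category of `RΓ_G`-modules: contravariant functors from the orbit
category to `R`-modules. -/
abbrev OrbitMod (R : Type) [CommRing R] {G : Type} [Group G] (F : SubgroupFamily G) :=
  (OrbitObj F)ᵒᵖ ⥤ ModuleCat.{0} R

variable {G : Type} [Group G] {R : Type} [CommRing R] {F : SubgroupFamily G}

/-- The free `RΓ_G`-module `R[G/H^?]`, with value the free `R`-module on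
`Map_G(G/K, G/H)` at the object `G/K`. -/
noncomputable def freeAt (R : Type) [CommRing R] {G : Type} [Group G] {F : SubgroupFamily G}
    (H : OrbitObj F) : OrbitMod R F where
  obj K := ModuleCat.of R ((K.unop ⟶ H) →₀ R)
  map f := ModuleCat.ofHom (Finsupp.lmapDomain R R (fun u => f.unop ≫ u))
  map_id K := by
    apply ModuleCat.hom_ext
    simp only [ModuleCat.hom_ofHom, ModuleCat.hom_id, unop_id, Category.id_comp]
    exact Finsupp.lmapDomain_id R R
  map_comp f g := by
    apply ModuleCat.hom_ext
    simp only [ModuleCat.hom_comp, ModuleCat.hom_ofHom, unop_comp, Category.assoc]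
    exact Finsupp.lmapDomain_comp R R _ _

/-- A free `RΓ_G`-module: a direct sum of modules `R[G/H^?]`, `H ∈ 𝓕`. -/
def IsFreeMod (M : OrbitMod R F) : Prop :=
  ∃ (ι : Type) (b : ι → OrbitObj F), Nonempty (M ≅ ∐ (fun i => freeAt R (b i)))

/-- A finitely generated `RΓ_G`-module: admits an epimorphism from a
finitely generated free module. -/
def IsFGMod (M : OrbitMod R F) : Prop :=
  ∃ (ι : Type) (_ : Fintype ι) (b : ι → OrbitObj F)
    (π : (∐ (fun i => freeAt R (b i))) ⟶ M), Epi π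

/-- A projective `RΓ_G`-module: a direct summand of a free module. -/
def IsProjMod (M : OrbitMod R F) : Prop :=
  ∃ (Fr : OrbitMod R F), IsFreeMod Fr ∧ ∃ (s : M ⟶ Fr) (r : Fr ⟶ M), s ≫ r = 𝟙 M

/-- Chain complexes of `RΓ_G`-modules (non-negatively graded). -/
abbrev OrbitComplex (R : Type) [CommRing R] {G : Type} [Group G] (F : SubgroupFamily G) :=
  ChainComplex (OrbitMod R F) ℕ

/-- The chain complex `C` vanishes at the object `G/K` in degree `i`. -/
def IsZeroAt (C : OrbitComplex R F) (K : OrbitObj F) (i : ℕ) : Prop :=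
  Subsingleton ((C.X i).obj (op K))

/-- The chain complex `C` is finite-dimensional: `C_i = 0` for all large `i`. -/
def IsFiniteDimC (C : OrbitComplex R F) : Prop :=
  ∃ n : ℕ, ∀ i : ℕ, n < i → ∀ K : OrbitObj F, IsZeroAt C K i

/-- The chain complex `C` is finite: finite-dimensional with finitely
generated chain modules. -/
def IsFiniteC (C : OrbitComplex R F) : Prop :=
  IsFiniteDimC C ∧ ∀ i : ℕ, IsFGMod (C.X i)

/-- `dim C(K)`: the largest `d` with `C_d(K) ≠ 0` (or `-1` for the zero complex). -/
noncomputable def dimAt (C : OrbitComplex R F) (K : OrbitObj F) : ℤ :=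
  sSup (insert (-1 : ℤ) {d : ℤ | ∃ i : ℕ, (i : ℤ) = d ∧ ¬ IsZeroAt C K i})

/-- The dimension function `Dim C : S(G) → ℤ`, with value `-1` outside `𝓕`. -/
noncomputable def DimFun (C : OrbitComplex R F) : Subgroup G → ℤ := fun H =>
  open scoped Classical in
  if h : F.mem H then dimAt C ⟨H, h⟩ else -1

/-- The augmented complex `⋯ → C₁ → C₀ → M → 0` (with `M` placed in degree `0`,
i.e. the whole complex shifted up by one). -/
noncomputable def augment {V : Type 1} [Category.{0} V] [Abelian V]
    (C : ChainComplex V ℕ) (M : V) (π : C.X 0 ⟶ M) (h : C.d 1 0 ≫ π = 0) :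
    ChainComplex V ℕ :=
  ChainComplex.of
    (fun j => match j with
      | 0 => M
      | (i+1) => C.X i)
    (fun j => match j with
      | 0 => π
      | (i+1) => C.d (i+1) i)
    (fun j => match j with
      | 0 => h
      | (i+1) => C.d_comp_d (i+2) (i+1) i)

/-- The constant coefficient system `R̲`. -/
noncomputable def constR (R : Type) [CommRing R] {G : Type} [Group G] (F : SubgroupFamily G) :
    OrbitMod R F :=
  (Functor.const (OrbitObj F)ᵒᵖ).obj (ModuleCat.of R R)

/-- Evaluation of a chain complex over `RΓ_G` at the object `G/K`. -/
noncomputable def evalC (C : OrbitComplex R F) (K : OrbitObj F) :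
    ChainComplex (ModuleCat.{0} R) ℕ where
  X i := (C.X i).obj (op K)
  d i j := (C.d i j).app (op K)
  shape i j hij := by rw [C.shape i j hij]; rfl
  d_comp_d' i j k _ _ := by
    rw [← NatTrans.comp_app, C.d_comp_d]; rfl

/-- The augmented complex of `C(K)` (with `R` in degree `-1`, shifted up by one). -/
noncomputable def augC (C : OrbitComplex R F) (ε : C.X 0 ⟶ constR R F)
    (h : C.d 1 0 ≫ ε = 0) (K : OrbitObj F) : ChainComplex (ModuleCat.{0} R) ℕ :=
  augment (evalC C K) (ModuleCat.of R R) (ε.app (op K))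
    (by show (C.d 1 0).app (op K) ≫ ε.app (op K) = 0
        rw [show (C.d 1 0).app (op K) ≫ ε.app (op K) = (C.d 1 0 ≫ ε).app (op K) from rfl, h]; rfl)

/-- `C` is an `R`-homology `n`-sphere: there is an augmentation `ε : C₀ → R̲`
such that for every `K ∈ 𝓕` the reduced homology of `C(K)` is that of the
sphere `S^{n(K)}` with coefficients in `R`.  (The homology of the augmented
complex — shifted up by one — is `R` in degree `n(K)+1` and zero elsewhere.) -/
noncomputable def IsHomologySphere (C : OrbitComplex R F) (n : Subgroup G → ℤ) : Prop :=
  ∃ (ε : C.X 0 ⟶ constR R F) (h : C.d 1 0 ≫ ε = 0),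
    (∀ K : OrbitObj F, (∃ i, ¬ IsZeroAt C K i) → Function.Surjective (ε.app (op K))) ∧
    ∀ (K : OrbitObj F) (j : ℕ),
      (if (j : ℤ) = n K.1 + 1
        then Nonempty ((augC C ε h K).homology j ≅ ModuleCat.of R R)
        else Subsingleton ((augC C ε h K).homology j))

/-- The chain map `C(K) → C(H)` induced by a `G`-map `f : G/H → G/K`. -/
noncomputable def evalMap (C : OrbitComplex R F) {H K : OrbitObj F} (f : H ⟶ K) :
    evalC C K ⟶ evalC C H where
  f i := (C.X i).map f.op
  comm' i j _ := (C.d i j).naturality f.op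

/-- Condition (ii) of an algebraic homotopy representation: if `n(H) = n(K)`,
every `G`-map `f : G/H → G/K` induces an `R`-homology isomorphism `C(K) → C(H)`. -/
noncomputable def CondII (C : OrbitComplex R F) (n : Subgroup G → ℤ) : Prop :=
  ∀ (H K : OrbitObj F) (f : H ⟶ K), n H.1 = n K.1 →
    ∀ i : ℕ, IsIso (HomologicalComplex.homologyMap (evalMap C f) i)

/-- Condition (iii) of an algebraic homotopy representation. -/
def CondIII (F : SubgroupFamily G) (n : Subgroup G → ℤ) : Prop :=
  ∀ H K L : Subgroup G, F.mem H → F.mem K → F.mem L → H ≤ K → H ≤ L →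
    n H = n K → n H = n L → -1 < n H → F.mem (K ⊔ L) ∧ n (K ⊔ L) = n H



variable {G : Type} [Group G]

/-- The `G`-map `G/K → G/L`, `gK ↦ gpL`, defined when `p⁻¹ K p ≤ L`. -/
def orbitMk {K L : Subgroup G} (p : G) (h : ∀ k ∈ K, p⁻¹ * k * p ∈ L) :
    (G ⧸ K) →[G] (G ⧸ L) where
  toFun x := Quotient.liftOn' x (fun g => ((g * p : G) : G ⧸ L)) (by
    intro a b hab
    rw [QuotientGroup.leftRel_apply] at hab
    apply Quotient.sound'
    rw [QuotientGroup.leftRel_apply]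
    have : (a * p)⁻¹ * (b * p) = p⁻¹ * (a⁻¹ * b) * p := by group
    rw [this]
    exact h _ hab)
  map_smul' g x := by
    induction x using QuotientGroup.induction_on with
    | H a => show (((g * a) * p : G) : G ⧸ L) = g • ((a * p : G) : G ⧸ L)
             rw [mul_assoc]; rfl

@[simp] lemma orbitMk_apply {K L : Subgroup G} (p : G) (h : ∀ k ∈ K, p⁻¹ * k * p ∈ L) (g : G) :
    orbitMk p h (g : G ⧸ K) = ((g * p : G) : G ⧸ L) := rfl

/-- The distinguished representative of a `G`-map `G/K → G/L`. -/
noncomputable def orbitPt {K L : Subgroup G} (φ : (G ⧸ K) →[G] (G ⧸ L)) : G :=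
  (φ ((1 : G) : G ⧸ K)).out

lemma orbitPt_spec {K L : Subgroup G} (φ : (G ⧸ K) →[G] (G ⧸ L)) :
    ((orbitPt φ : G) : G ⧸ L) = φ ((1 : G) : G ⧸ K) := Quotient.out_eq _

lemma orbit_hom_eq {K L : Subgroup G} (φ : (G ⧸ K) →[G] (G ⧸ L)) (g : G) :
    φ ((g : G) : G ⧸ K) = ((g * orbitPt φ : G) : G ⧸ L) := by
  calc φ ((g : G) : G ⧸ K) = φ (g • ((1 : G) : G ⧸ K)) := by
        rw [show g • ((1 : G) : G ⧸ K) = ((g * 1 : G) : G ⧸ K) from rfl, mul_one]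
    _ = g • φ ((1 : G) : G ⧸ K) := map_smul φ g _
    _ = g • ((orbitPt φ : G) : G ⧸ L) := by rw [orbitPt_spec]
    _ = ((g * orbitPt φ : G) : G ⧸ L) := rfl

lemma orbit_hom_mem {K L : Subgroup G} (φ : (G ⧸ K) →[G] (G ⧸ L)) :
    ∀ k ∈ K, (orbitPt φ)⁻¹ * k * orbitPt φ ∈ L := by
  intro k hk
  have h1 : ((k : G) : G ⧸ K) = ((1 : G) : G ⧸ K) := by
    rw [QuotientGroup.eq]; simpa using K.inv_mem hk
  have h2 : ((k * orbitPt φ : G) : G ⧸ L) = ((1 * orbitPt φ : G) : G ⧸ L) := by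
    rw [← orbit_hom_eq, ← orbit_hom_eq, h1]
  rw [QuotientGroup.eq] at h2
  have : (k * orbitPt φ)⁻¹ * (1 * orbitPt φ) = ((orbitPt φ)⁻¹ * k * orbitPt φ)⁻¹ := by group
  rw [this] at h2
  simpa using L.inv_mem h2

-- extensionality for maps out of quotients
lemma orbit_hom_ext {K L : Subgroup G} (φ ψ : (G ⧸ K) →[G] (G ⧸ L))
    (h : ∀ g : G, φ ((g : G) : G ⧸ K) = ψ ((g : G) : G ⧸ K)) : φ = ψ := by
  ext x
  induction x using QuotientGroup.induction_on with
  | H a => exact h a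

/-- The family `𝓕_P = {K ∈ 𝓕 : K ≤ P}` of subgroups of `P` induced by a family
of subgroups of `G`. -/
def SubFamily (F : SubgroupFamily G) (P : Subgroup G) : SubgroupFamily ↥P where
  mem K := F.mem (K.map P.subtype)
  conj_mem g K hK := by
    show F.mem ((conjSub g K).map P.subtype)
    have h : (conjSub g K).map P.subtype = conjSub (g : G) (K.map P.subtype) := by
      unfold conjSub
      rw [Subgroup.map_map, Subgroup.map_map]
      congr 1
    rw [h]
    exact F.conj_mem _ _ hK
  le_mem H K h hK := F.le_mem _ _ (Subgroup.map_mono h) hK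

/-- The `G`-map `G/K → G/L` induced by a `P`-map `P/K → P/L`, for `K, L ≤ P`. -/
noncomputable def inducedSubMap (P : Subgroup G) {K L : Subgroup ↥P}
    (φ : (↥P ⧸ K) →[↥P] (↥P ⧸ L)) :
    (G ⧸ K.map P.subtype) →[G] (G ⧸ L.map P.subtype) :=
  orbitMk ((orbitPt φ : ↥P) : G) (by
    intro k hk
    obtain ⟨k₀, hk₀, rfl⟩ := Subgroup.mem_map.mp hk
    exact Subgroup.mem_map.mpr ⟨_, orbit_hom_mem φ k₀ hk₀, by simp⟩)

lemma inducedSubMap_id (P : Subgroup G) (K : Subgroup ↥P) :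
    inducedSubMap P (MulActionHom.id ↥P (X := ↥P ⧸ K)) = MulActionHom.id G := by
  apply orbit_hom_ext
  intro g
  have hq : (orbitPt (MulActionHom.id ↥P (X := ↥P ⧸ K))) ∈ K := by
    have h0 := orbitPt_spec (MulActionHom.id ↥P (X := ↥P ⧸ K))
    have h1 : (MulActionHom.id ↥P (X := ↥P ⧸ K)) (((1 : ↥P) : ↥P ⧸ K)) =
        ((1 : ↥P) : ↥P ⧸ K) := rfl
    rw [h1, QuotientGroup.eq] at h0
    simpa using K.inv_mem h0
  show ((g * ((orbitPt (MulActionHom.id ↥P (X := ↥P ⧸ K)) : ↥P) : G) : G) :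
      G ⧸ K.map P.subtype) = ((g : G) : G ⧸ K.map P.subtype)
  rw [QuotientGroup.eq]
  have h2 : (g * ((orbitPt (MulActionHom.id ↥P (X := ↥P ⧸ K)) : ↥P) : G))⁻¹ * g =
      (((orbitPt (MulActionHom.id ↥P (X := ↥P ⧸ K)) : ↥P) : G))⁻¹ := by group
  rw [h2]
  exact (K.map P.subtype).inv_mem (Subgroup.mem_map.mpr ⟨_, hq, rfl⟩)

lemma inducedSubMap_comp (P : Subgroup G) {K L M : Subgroup ↥P}
    (φ : (↥P ⧸ K) →[↥P] (↥P ⧸ L)) (ψ : (↥P ⧸ L) →[↥P] (↥P ⧸ M)) :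
    inducedSubMap P (ψ.comp φ) = (inducedSubMap P ψ).comp (inducedSubMap P φ) := by
  apply orbit_hom_ext
  intro g
  have hr : (orbitPt (ψ.comp φ))⁻¹ * (orbitPt φ * orbitPt ψ) ∈ M := by
    have h1 : ((orbitPt (ψ.comp φ) : ↥P) : ↥P ⧸ M) = ((orbitPt φ * orbitPt ψ : ↥P) : ↥P ⧸ M) := by
      rw [orbitPt_spec]
      show ψ (φ ((1 : ↥P) : ↥P ⧸ K)) = _
      rw [show φ (((1 : ↥P) : ↥P ⧸ K)) = ((orbitPt φ : ↥P) : ↥P ⧸ L) from (orbitPt_spec φ).symm,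
        orbit_hom_eq ψ (orbitPt φ)]
    exact QuotientGroup.eq.mp h1
  show ((g * ((orbitPt (ψ.comp φ) : ↥P) : G) : G) : G ⧸ M.map P.subtype) =
    (inducedSubMap P ψ) ((inducedSubMap P φ) ((g : G) : G ⧸ K.map P.subtype))
  unfold inducedSubMap
  rw [orbitMk_apply, orbitMk_apply, QuotientGroup.eq]
  refine Subgroup.mem_map.mpr ⟨_, hr, ?_⟩
  simp only [Subgroup.coe_subtype]
  push_cast
  group

/-- The functor `Γ_P → Γ_G` sending `P/K` to `G/K`; restriction of modules
along (the opposite of) this functor is the restriction functor `res^G_P`. -/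
noncomputable def subOrbitFunctor (F : SubgroupFamily G) (P : Subgroup G) :
    OrbitObj (SubFamily F P) ⥤ OrbitObj F where
  obj K := ⟨K.1.map P.subtype, K.2⟩
  map {K L} φ := inducedSubMap P φ
  map_id K := inducedSubMap_id P K.1
  map_comp {K L M} φ ψ := inducedSubMap_comp P φ ψ

/-! ### The orbit-category functor `Γ_{G/N} → Γ_G` induced by a quotient `G → G/N` -/

/-- The `G`-map `G/K' → G/L'` (where `K' = comap(K̄)`, `L' = comap(L̄)`) induced by a
`G/N`-map `(G/N)/K̄ → (G/N)/L̄`. -/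
noncomputable def inducedQuotMap (N : Subgroup G) [N.Normal] {Kb Lb : Subgroup (G ⧸ N)}
    (φ : ((G ⧸ N) ⧸ Kb) →[G ⧸ N] ((G ⧸ N) ⧸ Lb)) :
    (G ⧸ Kb.comap (QuotientGroup.mk' N)) →[G] (G ⧸ Lb.comap (QuotientGroup.mk' N)) :=
  orbitMk ((orbitPt φ).out) (by
    intro k hk
    rw [Subgroup.mem_comap]
    have hout : (QuotientGroup.mk' N) (orbitPt φ).out = orbitPt φ := by
      rw [QuotientGroup.mk'_apply]; exact Quotient.out_eq _
    rw [map_mul, map_mul, map_inv, hout]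
    exact orbit_hom_mem φ _ (Subgroup.mem_comap.mp hk))

lemma inducedQuotMap_id (N : Subgroup G) [N.Normal] (Kb : Subgroup (G ⧸ N)) :
    inducedQuotMap N (MulActionHom.id (G ⧸ N) (X := (G ⧸ N) ⧸ Kb)) = MulActionHom.id G := by
  apply orbit_hom_ext
  intro g
  have hout : (QuotientGroup.mk' N) (orbitPt (MulActionHom.id (G ⧸ N) (X := (G ⧸ N) ⧸ Kb))).out
      = orbitPt (MulActionHom.id (G ⧸ N) (X := (G ⧸ N) ⧸ Kb)) := by
    rw [QuotientGroup.mk'_apply]; exact Quotient.out_eq _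
  have hq : (orbitPt (MulActionHom.id (G ⧸ N) (X := (G ⧸ N) ⧸ Kb))).out ∈
      Kb.comap (QuotientGroup.mk' N) := by
    rw [Subgroup.mem_comap, hout]
    have h0 := orbitPt_spec (MulActionHom.id (G ⧸ N) (X := (G ⧸ N) ⧸ Kb))
    have h1 : (MulActionHom.id (G ⧸ N) (X := (G ⧸ N) ⧸ Kb)) ((1 : G ⧸ N) : (G ⧸ N) ⧸ Kb) =
        ((1 : G ⧸ N) : (G ⧸ N) ⧸ Kb) := rfl
    rw [h1, QuotientGroup.eq] at h0
    simpa using Kb.inv_mem h0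
  show ((g * (orbitPt (MulActionHom.id (G ⧸ N) (X := (G ⧸ N) ⧸ Kb))).out : G) :
      G ⧸ Kb.comap (QuotientGroup.mk' N)) = ((g : G) : G ⧸ Kb.comap (QuotientGroup.mk' N))
  rw [QuotientGroup.eq]
  have h2 : (g * (orbitPt (MulActionHom.id (G ⧸ N) (X := (G ⧸ N) ⧸ Kb))).out)⁻¹ * g =
      ((orbitPt (MulActionHom.id (G ⧸ N) (X := (G ⧸ N) ⧸ Kb))).out)⁻¹ := by group
  rw [h2]
  exact (Kb.comap (QuotientGroup.mk' N)).inv_mem hq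

lemma inducedQuotMap_comp (N : Subgroup G) [N.Normal] {Kb Lb Mb : Subgroup (G ⧸ N)}
    (φ : ((G ⧸ N) ⧸ Kb) →[G ⧸ N] ((G ⧸ N) ⧸ Lb))
    (ψ : ((G ⧸ N) ⧸ Lb) →[G ⧸ N] ((G ⧸ N) ⧸ Mb)) :
    inducedQuotMap N (ψ.comp φ) = (inducedQuotMap N ψ).comp (inducedQuotMap N φ) := by
  apply orbit_hom_ext
  intro g
  have hr : (orbitPt (ψ.comp φ))⁻¹ * (orbitPt φ * orbitPt ψ) ∈ Mb := by
    have h1 : ((orbitPt (ψ.comp φ) : G ⧸ N) : (G ⧸ N) ⧸ Mb)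
        = ((orbitPt φ * orbitPt ψ : G ⧸ N) : (G ⧸ N) ⧸ Mb) := by
      rw [orbitPt_spec]
      show ψ (φ ((1 : G ⧸ N) : (G ⧸ N) ⧸ Kb)) = _
      rw [show φ ((1 : G ⧸ N) : (G ⧸ N) ⧸ Kb) = ((orbitPt φ : G ⧸ N) : (G ⧸ N) ⧸ Lb) from
            (orbitPt_spec φ).symm,
        orbit_hom_eq ψ (orbitPt φ)]
    exact QuotientGroup.eq.mp h1
  show ((g * (orbitPt (ψ.comp φ)).out : G) : G ⧸ Mb.comap (QuotientGroup.mk' N)) =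
    (inducedQuotMap N ψ) ((inducedQuotMap N φ) ((g : G) : G ⧸ Kb.comap (QuotientGroup.mk' N)))
  unfold inducedQuotMap
  rw [orbitMk_apply, orbitMk_apply, QuotientGroup.eq]
  rw [Subgroup.mem_comap]
  have hout : ∀ {Ab Bb : Subgroup (G ⧸ N)} (χ : ((G ⧸ N) ⧸ Ab) →[G ⧸ N] ((G ⧸ N) ⧸ Bb)),
      (QuotientGroup.mk' N) (orbitPt χ).out = orbitPt χ := fun χ => by
    rw [QuotientGroup.mk'_apply]; exact Quotient.out_eq _
  have : (QuotientGroup.mk' N) ((g * (orbitPt (ψ.comp φ)).out)⁻¹ * (g * (orbitPt φ).out * (orbitPt ψ).out))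
      = (orbitPt (ψ.comp φ))⁻¹ * (orbitPt φ * orbitPt ψ) := by
    rw [map_mul, map_inv, map_mul, map_mul, map_mul, hout, hout, hout]
    group
  rw [this]
  exact hr

/-- The functor `Γ_{G/N} → Γ_G` regarding an orbit of `G/N` as a `G`-set via the
quotient map `G → G/N`.  Restriction of modules along (the opposite of) this
functor is the deflation functor `Def^G_{G/N}`. -/
noncomputable def quotOrbitFunctor (F : SubgroupFamily G) (N : Subgroup G) [N.Normal]
    (FQ : SubgroupFamily (G ⧸ N))
    (hFQ : ∀ Kb : Subgroup (G ⧸ N), FQ.mem Kb ↔ F.mem (Kb.comap (QuotientGroup.mk' N))) :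
    OrbitObj FQ ⥤ OrbitObj F where
  obj Kb := ⟨Kb.1.comap (QuotientGroup.mk' N), (hFQ _).mp Kb.2⟩
  map {Kb Lb} φ := inducedQuotMap N φ
  map_id Kb := inducedQuotMap_id N Kb.1
  map_comp {Kb Lb Mb} φ ψ := inducedQuotMap_comp N φ ψ

/-- The deflation functor `Def^G_{G/N}`: restriction of modules along
`Γ_{G/N} → Γ_G`. -/
noncomputable def defMod (R : Type) [CommRing R] {G : Type} [Group G] (F : SubgroupFamily G)
    (N : Subgroup G) [N.Normal] (FQ : SubgroupFamily (G ⧸ N))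
    (hFQ : ∀ Kb : Subgroup (G ⧸ N), FQ.mem Kb ↔ F.mem (Kb.comap (QuotientGroup.mk' N))) :
    OrbitMod R F ⥤ OrbitMod R FQ :=
  (Functor.whiskeringLeft _ _ _).obj (quotOrbitFunctor F N FQ hFQ).op

/-! ### The module `R[X]` of a `G`-set `X` -/

/-- The `RΓ_G`-module `R[X]` of a `G`-set `X`, with value the free `R`-module
on `X^K ≅ Map_G(G/K, X)` at `G/K`. -/
noncomputable def gsetMod (R : Type) [CommRing R] {G : Type} [Group G] (F : SubgroupFamily G)
    (X : Type) [MulAction G X] : OrbitMod R F where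
  obj V := ModuleCat.of R (((G ⧸ (V.unop).1) →[G] X) →₀ R)
  map {V W} f := ModuleCat.ofHom
    (Finsupp.lmapDomain R R (fun (u : (G ⧸ (V.unop).1) →[G] X) => u.comp f.unop))
  map_id V := ModuleCat.hom_ext <|
    (congrArg (Finsupp.lmapDomain R R)
      (funext fun (u : (G ⧸ (V.unop).1) →[G] X) => MulActionHom.comp_id u)).trans
      (Finsupp.lmapDomain_id R R)
  map_comp {V W U} f g := by
    have h : (fun (u : (G ⧸ (V.unop).1) →[G] X) => u.comp ((f ≫ g).unop)) =
        ((fun (u : (G ⧸ (W.unop).1) →[G] X) => u.comp g.unop) ∘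
          (fun (u : (G ⧸ (V.unop).1) →[G] X) => u.comp f.unop)) :=
      funext fun u => MulActionHom.comp_assoc u f.unop g.unop
    exact ModuleCat.hom_ext <|
      (congrArg (Finsupp.lmapDomain R R) h).trans (Finsupp.lmapDomain_comp R R _ _)

/-- A `G/N`-set regarded as a `G`-set via the quotient map `G → G/N`. -/
def InflatedSet {G : Type} [Group G] (N : Subgroup G) [N.Normal] (X : Type) : Type := X

instance {G : Type} [Group G] (N : Subgroup G) [N.Normal] (X : Type)
    [MulAction (G ⧸ N) X] : MulAction G (InflatedSet N X) :=
  MulAction.compHom X (QuotientGroup.mk' N)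

/-- The `G/N`-action on the `N`-fixed points of a `G`-set. -/
noncomputable instance fixedPointsQuotientAction {G : Type} [Group G] (N : Subgroup G)
    [hN : N.Normal] (X : Type) [MulAction G X] :
    MulAction (G ⧸ N) (MulAction.fixedPoints ↥N X) where
  smul q x := Quotient.liftOn' q
    (fun g => (⟨g • (x : X), by
      rw [MulAction.mem_fixedPoints]
      intro n
      have h1 : (n : G) • (g • (x : X)) = g • (((g⁻¹ * n * g : G) : G) • (x : X)) := by
        rw [← mul_smul, ← mul_smul]
        congr 1
        group
      have h2 : ((g⁻¹ * (n : G) * g : G)) • (x : X) = (x : X) := by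
        have hmem : g⁻¹ * (n : G) * g ∈ N := by
          have := hN.conj_mem (n : G) n.2 g⁻¹
          simpa [mul_assoc] using this
        exact x.2 ⟨_, hmem⟩
      show (n : G) • (g • (x : X)) = g • (x : X)
      rw [h1, h2]⟩ : MulAction.fixedPoints ↥N X))
    (by
      intro a b hab
      rw [QuotientGroup.leftRel_apply] at hab
      apply Subtype.ext
      show a • (x : X) = b • (x : X)
      have hx : ((a⁻¹ * b : G)) • (x : X) = (x : X) := x.2 ⟨_, hab⟩
      have hb : b = a * (a⁻¹ * b) := by group
      rw [hb, mul_smul, hx])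
  one_smul x := by
    apply Subtype.ext
    show (1 : G) • (x : X) = (x : X)
    exact one_smul G (x : X)
  mul_smul q r x := by
    induction q using QuotientGroup.induction_on with
    | H a =>
      induction r using QuotientGroup.induction_on with
      | H b =>
        apply Subtype.ext
        show (a * b) • (x : X) = a • (b • (x : X))
        exact mul_smul a b (x : X)

section S5
variable {G : Type} [Group G] (N : Subgroup G) [N.Normal] {X : Type} [MulAction (G ⧸ N) X]

lemma inflated_smul (g : G) (x : InflatedSet N X) :
    (show X from g • x) = (g : G ⧸ N) • (show X from x) := rfl

/-- ext for equivariant maps out of a quotient -/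
lemma quot_hom_ext' {K : Subgroup G} {Y : Type} [MulAction G Y] (φ ψ : (G ⧸ K) →[G] Y)
    (h : ∀ g : G, φ ((g : G) : G ⧸ K) = ψ ((g : G) : G ⧸ K)) : φ = ψ := by
  ext x
  induction x using QuotientGroup.induction_on with
  | H a => exact h a

/-- lift a `G/N`-map `(G/N)/K̄ → X` to a `G`-map `G/comap K̄ → Inf X`. -/
def liftHom (Kb : Subgroup (G ⧸ N)) (φ : ((G ⧸ N) ⧸ Kb) →[G ⧸ N] X) :
    (G ⧸ Kb.comap (QuotientGroup.mk' N)) →[G] InflatedSet N X where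
  toFun x := Quotient.liftOn' x (fun g => φ (((g : G ⧸ N)) : (G ⧸ N) ⧸ Kb)) (by
    intro a b hab
    rw [QuotientGroup.leftRel_apply] at hab
    have : (((a : G ⧸ N)) : (G ⧸ N) ⧸ Kb) = (((b : G ⧸ N)) : (G ⧸ N) ⧸ Kb) := by
      rw [QuotientGroup.eq]
      have h2 : (a : G ⧸ N)⁻¹ * (b : G ⧸ N) = ((a⁻¹ * b : G) : G ⧸ N) := by
        rw [QuotientGroup.mk_mul, QuotientGroup.mk_inv]
      rw [h2]
      exact hab
    show φ _ = φ _
    rw [this])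
  map_smul' g x := by
    induction x using QuotientGroup.induction_on with
    | H a =>
      show φ ((((g * a : G) : G ⧸ N)) : (G ⧸ N) ⧸ Kb)
          = g • (show InflatedSet N X from φ ((((a : G) : G ⧸ N)) : (G ⧸ N) ⧸ Kb))
      rw [show (g • (show InflatedSet N X from φ ((((a : G) : G ⧸ N)) : (G ⧸ N) ⧸ Kb)))
            = ((g : G ⧸ N) • (φ ((((a : G) : G ⧸ N)) : (G ⧸ N) ⧸ Kb) : X) : X) from rfl]
      rw [← map_smul]
      congr 1

@[simp] lemma liftHom_apply (Kb : Subgroup (G ⧸ N)) (φ : ((G ⧸ N) ⧸ Kb) →[G ⧸ N] X) (g : G) :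
    liftHom N Kb φ ((g : G) : G ⧸ Kb.comap (QuotientGroup.mk' N))
      = φ (((g : G ⧸ N)) : (G ⧸ N) ⧸ Kb) := rfl

lemma liftHom_natural (Kb Lb : Subgroup (G ⧸ N)) (ψ : ((G ⧸ N) ⧸ Kb) →[G ⧸ N] ((G ⧸ N) ⧸ Lb))
    (φ : ((G ⧸ N) ⧸ Lb) →[G ⧸ N] X) :
    liftHom N Kb (φ.comp ψ) = (liftHom N Lb φ).comp (inducedQuotMap N ψ) := by
  apply quot_hom_ext'
  intro g
  show φ (ψ (((g : G ⧸ N)) : (G ⧸ N) ⧸ Kb)) = liftHom N Lb φ (inducedQuotMap N ψ ((g : G) : _))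
  rw [orbit_hom_eq ψ]
  rw [show inducedQuotMap N ψ ((g : G) : _)
      = (((g * (orbitPt ψ).out : G)) : G ⧸ Lb.comap (QuotientGroup.mk' N)) from rfl]
  rw [liftHom_apply]
  congr 2
  rw [QuotientGroup.mk_mul]
  congr 1
  exact (Quotient.out_eq _).symm

end S5


section S5b
variable {G : Type} [Group G] (N : Subgroup G) [N.Normal] {X : Type} [MulAction (G ⧸ N) X]

/-- base point of an equivariant map out of an orbit. -/
def basePt (K : Subgroup G) (ψ : (G ⧸ K) →[G] InflatedSet N X) : X :=
  ψ ((1 : G) : G ⧸ K)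

/-- the orbit map of a point. -/
def orbitMapOf (x : X) : ((G ⧸ N) ⧸ MulAction.stabilizer (G ⧸ N) x) →[G ⧸ N] X where
  toFun q := Quotient.liftOn' q (fun g => g • x) (by
    intro a b hab
    rw [QuotientGroup.leftRel_apply] at hab
    show a • x = b • x
    have : (a⁻¹ * b) • x = x := hab
    calc a • x = a • ((a⁻¹ * b) • x) := by rw [this]
      _ = b • x := by rw [← mul_smul]; congr 1; group)
  map_smul' g q := by
    induction q using QuotientGroup.induction_on with
    | H a =>
      show (g * a) • x = g • (a • x)
      rw [mul_smul]

@[simp] lemma orbitMapOf_apply (x : X) (q : G ⧸ N) :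
    orbitMapOf N x ((q : (G ⧸ N) ⧸ MulAction.stabilizer (G ⧸ N) x)) = q • x := rfl

lemma apply_eq_smul (Kb : Subgroup (G ⧸ N)) (φ : ((G ⧸ N) ⧸ Kb) →[G ⧸ N] X) (q : G ⧸ N) :
    φ ((q : (G ⧸ N) ⧸ Kb)) = q • φ (((1 : G ⧸ N) : (G ⧸ N) ⧸ Kb)) := by
  have h : ((q : (G ⧸ N) ⧸ Kb)) = q • (((1 : G ⧸ N) : (G ⧸ N) ⧸ Kb)) := by
    show _ = ((q * 1 : G ⧸ N) : (G ⧸ N) ⧸ Kb)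
    rw [mul_one]
  rw [h, map_smul]

lemma mem_comap_stab (K : Subgroup G) (ψ : (G ⧸ K) →[G] InflatedSet N X) :
    ∀ k ∈ K, (1 : G)⁻¹ * k * 1 ∈
      (MulAction.stabilizer (G ⧸ N) (basePt N K ψ)).comap (QuotientGroup.mk' N) := by
  intro k hk
  rw [inv_one, one_mul, mul_one, Subgroup.mem_comap, MulAction.mem_stabilizer_iff]
  show (k : G ⧸ N) • (basePt N K ψ) = basePt N K ψ
  unfold basePt
  rw [← inflated_smul N k (ψ ((1 : G) : G ⧸ K)), ← map_smul]
  show ψ (k • ((1 : G) : G ⧸ K)) = _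
  congr 1
  show ((k * 1 : G) : G ⧸ K) = _
  rw [QuotientGroup.eq]
  simpa using K.inv_mem hk

/-- the canonical projection `G/K → G/comap(stab)` -/
def canMap (K : Subgroup G) (ψ : (G ⧸ K) →[G] InflatedSet N X) :
    (G ⧸ K) →[G] (G ⧸ (MulAction.stabilizer (G ⧸ N) (basePt N K ψ)).comap (QuotientGroup.mk' N)) :=
  orbitMk 1 (mem_comap_stab N K ψ)

lemma canMap_factor (K : Subgroup G) (ψ : (G ⧸ K) →[G] InflatedSet N X) :
    (liftHom N _ (orbitMapOf N (basePt N K ψ))).comp (canMap N K ψ) = ψ := by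
  apply quot_hom_ext'
  intro g
  show liftHom N _ (orbitMapOf N (basePt N K ψ)) ((g * 1 : G) : _) = ψ ((g : G) : G ⧸ K)
  rw [liftHom_apply, orbitMapOf_apply, mul_one]
  have h : ((g : G) : G ⧸ K) = g • ((1 : G) : G ⧸ K) := by
    show _ = ((g * 1 : G) : G ⧸ K)
    rw [mul_one]
  rw [h, map_smul]
  exact (inflated_smul N g (ψ ((1 : G) : G ⧸ K))).symm

end S5b


section S5c
variable {G : Type} [Group G] {R : Type} [CommRing R]
variable (N : Subgroup G) [N.Normal] {X : Type} [MulAction (G ⧸ N) X]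
variable (F : SubgroupFamily G) (FQ : SubgroupFamily (G ⧸ N))
variable (hFQ : ∀ Kb : Subgroup (G ⧸ N), FQ.mem Kb ↔ F.mem (Kb.comap (QuotientGroup.mk' N)))
variable (hiso : ∀ x : X, FQ.mem (MulAction.stabilizer (G ⧸ N) x))

/-- the orbit of `x` as an object of the orbit category of `G/N`. -/
def stabObj (x : X) : OrbitObj FQ := ⟨MulAction.stabilizer (G ⧸ N) x, hiso x⟩

/-- the canonical projection as a morphism in the orbit category of `G`. -/
noncomputable def canHom (K' : OrbitObj F) (ψ : (G ⧸ K'.1) →[G] InflatedSet N X) :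
    K' ⟶ (quotOrbitFunctor F N FQ hFQ).obj (stabObj N FQ hiso (basePt N K'.1 ψ)) :=
  canMap N K'.1 ψ

/-- the canonical value of `σ` on the basis element `ψ`. -/
noncomputable def canVal (M : OrbitMod R F) (σ : gsetMod R FQ X ⟶ (defMod R F N FQ hFQ).obj M)
    (K' : OrbitObj F) (ψ : (G ⧸ K'.1) →[G] InflatedSet N X) : M.obj (op K') :=
  M.map (canHom N F FQ hFQ hiso K' ψ).op
    (σ.app (op (stabObj N FQ hiso (basePt N K'.1 ψ)))
      (Finsupp.single (orbitMapOf N (basePt N K'.1 ψ)) 1))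

lemma key (M : OrbitMod R F) (σ : gsetMod R FQ X ⟶ (defMod R F N FQ hFQ).obj M)
    (K' : OrbitObj F) (ψ : (G ⧸ K'.1) →[G] InflatedSet N X)
    (Kb : OrbitObj FQ) (φ : ((G ⧸ N) ⧸ Kb.1) →[G ⧸ N] X)
    (u : K' ⟶ (quotOrbitFunctor F N FQ hFQ).obj Kb)
    (hfac : (liftHom N Kb.1 φ).comp u = ψ) :
    M.map u.op (σ.app (op Kb) (Finsupp.single φ 1)) =
      canVal N F FQ hFQ hiso M σ K' ψ := by
  let u' : (G ⧸ K'.1) →[G] (G ⧸ ((quotOrbitFunctor F N FQ hFQ).obj Kb).1) := u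
  set x : X := basePt N K'.1 ψ with hxdef
  set p : G := orbitPt u' with hpdef
  set y : X := φ (((1 : G ⧸ N) : (G ⧸ N) ⧸ Kb.1)) with hydef
  -- x = p̄ • y
  have hx : x = ((p : G ⧸ N)) • y := by
    have h1 : ψ ((1 : G) : G ⧸ K'.1) = (liftHom N Kb.1 φ) (u' ((1 : G) : G ⧸ K'.1)) := by
      rw [← hfac]; rfl
    show ψ ((1 : G) : G ⧸ K'.1) = _
    rw [h1, orbit_hom_eq u', one_mul]
    show φ (((orbitPt u' : G) : G ⧸ N) : (G ⧸ N) ⧸ Kb.1) = _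
    rw [apply_eq_smul, ← hydef, ← hpdef]
  -- the conjugating morphism vb : Kb ⟶ stabObj x
  have hv : ∀ k ∈ Kb.1, (((p : G ⧸ N))⁻¹)⁻¹ * k * ((p : G ⧸ N))⁻¹ ∈
      MulAction.stabilizer (G ⧸ N) x := by
    intro k hk
    have hy : k • y = y := by
      rw [hydef, ← map_smul]
      congr 1
      show ((k * 1 : G ⧸ N) : (G ⧸ N) ⧸ Kb.1) = _
      rw [mul_one, QuotientGroup.eq]
      simpa using Kb.1.inv_mem hk
    rw [MulAction.mem_stabilizer_iff, hx, smul_smul,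
      show ((p : G ⧸ N)⁻¹)⁻¹ * k * (p : G ⧸ N)⁻¹ * (p : G ⧸ N) = (p : G ⧸ N) * k by group,
      mul_smul, hy]
  let vb : Kb ⟶ stabObj N FQ hiso x := orbitMk ((p : G ⧸ N))⁻¹ hv
  let vb' : ((G ⧸ N) ⧸ Kb.1) →[G ⧸ N] ((G ⧸ N) ⧸ (stabObj N FQ hiso x).1) := vb
  -- Claim A : φ = (orbitMapOf x) ∘ vb
  have claimA : (orbitMapOf N x).comp vb' = φ := by
    apply quot_hom_ext'
    intro q
    show orbitMapOf N x (((q * (p : G ⧸ N)⁻¹ : G ⧸ N) : (G ⧸ N) ⧸ _)) = φ _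
    rw [orbitMapOf_apply, apply_eq_smul N Kb.1 φ q, ← hydef, hx, smul_smul]
    congr 1
    group
  -- Claim B : u ≫ Q.map vb = canHom ψ
  have claimB : u ≫ (quotOrbitFunctor F N FQ hFQ).map vb = canHom N F FQ hFQ hiso K' ψ := by
    apply quot_hom_ext'
    intro g
    show inducedQuotMap N vb' (u' ((g : G) : G ⧸ K'.1)) = ((g * 1 : G) : _)
    rw [orbit_hom_eq u', ← hpdef]
    show ((g * p * (orbitPt vb').out : G) :
        G ⧸ Subgroup.comap (QuotientGroup.mk' N) (MulAction.stabilizer (G ⧸ N) x)) =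
      ((g * 1 : G) : G ⧸ Subgroup.comap (QuotientGroup.mk' N) (MulAction.stabilizer (G ⧸ N) x))
    rw [QuotientGroup.eq]
    rw [Subgroup.mem_comap]
    have hr : (QuotientGroup.mk' N) ((g * p * (orbitPt vb').out)⁻¹ * (g * 1))
        = ((orbitPt vb')⁻¹ * ((p : G ⧸ N))⁻¹) := by
      have h2 : (g * p * (orbitPt vb').out)⁻¹ * (g * 1) = ((orbitPt vb').out)⁻¹ * p⁻¹ := by group
      rw [h2, map_mul, map_inv, map_inv]
      congr 2
      exact Quotient.out_eq _
    rw [hr]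
    have h1 : ((p : G ⧸ N)) * orbitPt vb' ∈ MulAction.stabilizer (G ⧸ N) x := by
      have h0 : ((1 * (p : G ⧸ N)⁻¹ : G ⧸ N) : (G ⧸ N) ⧸ MulAction.stabilizer (G ⧸ N) x)
          = ((orbitPt vb' : G ⧸ N) : _) := (orbitPt_spec vb').symm
      have h3 := QuotientGroup.eq.mp h0
      simpa using h3
    have h4 := (MulAction.stabilizer (G ⧸ N) x).inv_mem h1
    rw [mul_inv_rev] at h4
    exact h4
  -- now compute
  have hsingle : (Finsupp.single φ (1 : R)) =
      (gsetMod R FQ X).map vb.op (Finsupp.single (orbitMapOf N x) 1) := by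
    show _ = Finsupp.lmapDomain R R (fun w => w.comp vb.op.unop) (Finsupp.single (orbitMapOf N x) 1)
    rw [Finsupp.lmapDomain_apply, Finsupp.mapDomain_single]
    rw [show (orbitMapOf N x).comp vb.op.unop = φ from claimA]
  rw [hsingle]
  have hnat := congrArg (fun (t : (gsetMod R FQ X).obj (op (stabObj N FQ hiso x)) ⟶
        ((defMod R F N FQ hFQ).obj M).obj (op Kb)) =>
      t (Finsupp.single (orbitMapOf N x) 1)) (σ.naturality vb.op)
  rw [show σ.app (op Kb) ((gsetMod R FQ X).map vb.op (Finsupp.single (orbitMapOf N x) 1))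
      = ((defMod R F N FQ hFQ).obj M).map vb.op
          (σ.app (op (stabObj N FQ hiso x)) (Finsupp.single (orbitMapOf N x) 1)) from hnat]
  have hcomp : ∀ m0 : ((defMod R F N FQ hFQ).obj M).obj (op (stabObj N FQ hiso x)),
      M.map u.op (M.map ((quotOrbitFunctor F N FQ hFQ).map vb).op m0)
        = M.map (u ≫ (quotOrbitFunctor F N FQ hFQ).map vb).op m0 := by
    intro m0
    rw [op_comp, M.map_comp]
    rfl
  rw [show ((defMod R F N FQ hFQ).obj M).map vb.op
        (σ.app (op (stabObj N FQ hiso x)) (Finsupp.single (orbitMapOf N x) 1))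
      = M.map ((quotOrbitFunctor F N FQ hFQ).map vb).op
        (σ.app (op (stabObj N FQ hiso x)) (Finsupp.single (orbitMapOf N x) 1)) from rfl,
    hcomp, claimB]
  rfl

end S5c


section S5d
variable {G : Type} [Group G] {R : Type} [CommRing R]

lemma gsetMod_map_single {F : SubgroupFamily G} {Y : Type} [MulAction G Y]
    {V W : (OrbitObj F)ᵒᵖ} (f : V ⟶ W) (a : (G ⧸ V.unop.1) →[G] Y) (b : R) :
    (gsetMod R F Y).map f (Finsupp.single a b) = Finsupp.single (a.comp f.unop) b := by
  show Finsupp.lmapDomain R R _ (Finsupp.single a b) = _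
  rw [Finsupp.lmapDomain_apply, Finsupp.mapDomain_single]

lemma lift_single {M : Type} [AddCommGroup M] [Module R M] {ι : Type} (f : ι → M)
    (a : ι) (b : R) : Finsupp.lift M R ι f (Finsupp.single a b) = b • f a := by
  rw [Finsupp.lift_apply, Finsupp.sum_single_index]
  rw [zero_smul]

variable (N : Subgroup G) [N.Normal] {X : Type} [MulAction (G ⧸ N) X]
variable (F : SubgroupFamily G) (FQ : SubgroupFamily (G ⧸ N))
variable (hFQ : ∀ Kb : Subgroup (G ⧸ N), FQ.mem Kb ↔ F.mem (Kb.comap (QuotientGroup.mk' N)))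
variable (hiso : ∀ x : X, FQ.mem (MulAction.stabilizer (G ⧸ N) x))

/-- the forward map `Hom(R[Inf X], M) → Hom(R[X], Def M)`. -/
noncomputable def theta (M : OrbitMod R F) (τ : gsetMod R F (InflatedSet N X) ⟶ M) :
    gsetMod R FQ X ⟶ (defMod R F N FQ hFQ).obj M where
  app V := ModuleCat.ofHom ((τ.app (op ((quotOrbitFunctor F N FQ hFQ).obj V.unop))).hom.comp
    (Finsupp.lmapDomain R R (liftHom N V.unop.1)))
  naturality {V W} f := by
    apply ModuleCat.hom_ext
    apply Finsupp.lhom_ext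
    intro a b
    show τ.app (op ((quotOrbitFunctor F N FQ hFQ).obj W.unop))
        (Finsupp.lmapDomain R R (liftHom N W.unop.1)
          ((gsetMod R FQ X).map f (Finsupp.single a b)))
      = M.map ((quotOrbitFunctor F N FQ hFQ).map f.unop).op
        (τ.app (op ((quotOrbitFunctor F N FQ hFQ).obj V.unop))
          (Finsupp.lmapDomain R R (liftHom N V.unop.1) (Finsupp.single a b)))
    rw [gsetMod_map_single]
    rw [show Finsupp.lmapDomain R R (liftHom N W.unop.1)
          (Finsupp.single (a.comp f.unop) b)
        = Finsupp.single (liftHom N W.unop.1 (a.comp f.unop)) b by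
      rw [Finsupp.lmapDomain_apply, Finsupp.mapDomain_single]]
    rw [show Finsupp.lmapDomain R R (liftHom N V.unop.1) (Finsupp.single a b)
        = Finsupp.single (liftHom N V.unop.1 a) b by
      rw [Finsupp.lmapDomain_apply, Finsupp.mapDomain_single]]
    have hτ := congrArg (fun (t : (gsetMod R F (InflatedSet N X)).obj
          (op ((quotOrbitFunctor F N FQ hFQ).obj V.unop)) ⟶
          M.obj (op ((quotOrbitFunctor F N FQ hFQ).obj W.unop))) =>
        t (Finsupp.single (liftHom N V.unop.1 a) b))
      (τ.naturality ((quotOrbitFunctor F N FQ hFQ).map f.unop).op)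
    erw [show M.map ((quotOrbitFunctor F N FQ hFQ).map f.unop).op
          (τ.app (op ((quotOrbitFunctor F N FQ hFQ).obj V.unop))
            (Finsupp.single (liftHom N V.unop.1 a) b))
        = τ.app (op ((quotOrbitFunctor F N FQ hFQ).obj W.unop))
            ((gsetMod R F (InflatedSet N X)).map
              ((quotOrbitFunctor F N FQ hFQ).map f.unop).op
              (Finsupp.single (liftHom N V.unop.1 a) b)) from hτ.symm]
    erw [gsetMod_map_single]
    congr 2
    exact liftHom_natural N W.unop.1 V.unop.1 f.unop a

/-- the backward map `Hom(R[X], Def M) → Hom(R[Inf X], M)`. -/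
noncomputable def psi (M : OrbitMod R F) (σ : gsetMod R FQ X ⟶ (defMod R F N FQ hFQ).obj M) :
    gsetMod R F (InflatedSet N X) ⟶ M where
  app V := ModuleCat.ofHom (Finsupp.lift (M.obj (op V.unop)) R ((G ⧸ V.unop.1) →[G] InflatedSet N X)
    (fun ψ => canVal N F FQ hFQ hiso M σ V.unop ψ))
  naturality {V W} f := by
    apply ModuleCat.hom_ext
    apply Finsupp.lhom_ext
    intro ψ b
    show Finsupp.lift (M.obj (op W.unop)) R _ (fun ψ => canVal N F FQ hFQ hiso M σ W.unop ψ)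
        ((gsetMod R F (InflatedSet N X)).map f (Finsupp.single ψ b))
      = M.map f (Finsupp.lift (M.obj (op V.unop)) R _
          (fun ψ => canVal N F FQ hFQ hiso M σ V.unop ψ) (Finsupp.single ψ b))
    rw [gsetMod_map_single, lift_single, lift_single, map_smul]
    congr 1
    -- M.map f (canVal V ψ) = canVal W (ψ.comp f.unop)
    rw [show canVal N F FQ hFQ hiso M σ V.unop ψ
        = M.map (canHom N F FQ hFQ hiso V.unop ψ).op
            (σ.app (op (stabObj N FQ hiso (basePt N V.unop.1 ψ)))
              (Finsupp.single (orbitMapOf N (basePt N V.unop.1 ψ)) 1)) from rfl]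
    rw [show M.map f (M.map (canHom N F FQ hFQ hiso V.unop ψ).op
            (σ.app (op (stabObj N FQ hiso (basePt N V.unop.1 ψ)))
              (Finsupp.single (orbitMapOf N (basePt N V.unop.1 ψ)) 1)))
        = M.map (f.unop ≫ canHom N F FQ hFQ hiso V.unop ψ).op
            (σ.app (op (stabObj N FQ hiso (basePt N V.unop.1 ψ)))
              (Finsupp.single (orbitMapOf N (basePt N V.unop.1 ψ)) 1)) by
      rw [op_comp, M.map_comp]
      rfl]
    exact Eq.symm <| key N F FQ hFQ hiso M σ W.unop (ψ.comp f.unop)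
      (stabObj N FQ hiso (basePt N V.unop.1 ψ)) (orbitMapOf N (basePt N V.unop.1 ψ))
      (f.unop ≫ canHom N F FQ hFQ hiso V.unop ψ)
      (by
        show (liftHom N _ (orbitMapOf N (basePt N V.unop.1 ψ))).comp
            ((canHom N F FQ hFQ hiso V.unop ψ).comp f.unop) = ψ.comp f.unop
        rw [show (liftHom N _ (orbitMapOf N (basePt N V.unop.1 ψ))).comp
            ((canHom N F FQ hFQ hiso V.unop ψ).comp f.unop)
          = ((liftHom N _ (orbitMapOf N (basePt N V.unop.1 ψ))).comp
              (canMap N V.unop.1 ψ)).comp f.unop from rfl]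
        rw [canMap_factor])

end S5d


section S5e
variable {G : Type} [Group G] {R : Type} [CommRing R]
variable (N : Subgroup G) [N.Normal] {X : Type} [MulAction (G ⧸ N) X]
variable (F : SubgroupFamily G) (FQ : SubgroupFamily (G ⧸ N))
variable (hFQ : ∀ Kb : Subgroup (G ⧸ N), FQ.mem Kb ↔ F.mem (Kb.comap (QuotientGroup.mk' N)))
variable (hiso : ∀ x : X, FQ.mem (MulAction.stabilizer (G ⧸ N) x))

lemma theta_natural (M M' : OrbitMod R F) (τ : gsetMod R F (InflatedSet N X) ⟶ M)
    (g : M ⟶ M') :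
    theta N F FQ hFQ M' (τ ≫ g) = theta N F FQ hFQ M τ ≫ (defMod R F N FQ hFQ).map g := rfl

lemma theta_psi (M : OrbitMod R F) (σ : gsetMod R FQ X ⟶ (defMod R F N FQ hFQ).obj M) :
    theta N F FQ hFQ M (psi N F FQ hFQ hiso M σ) = σ := by
  apply NatTrans.ext
  funext V
  apply ModuleCat.hom_ext
  apply Finsupp.lhom_ext
  intro φ b
  show (psi N F FQ hFQ hiso M σ).app (op ((quotOrbitFunctor F N FQ hFQ).obj V.unop))
      (Finsupp.lmapDomain R R (liftHom N V.unop.1) (Finsupp.single φ b))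
    = σ.app V (Finsupp.single φ b)
  rw [show Finsupp.lmapDomain R R (liftHom N V.unop.1) (Finsupp.single φ b)
      = Finsupp.single (liftHom N V.unop.1 φ) b by
    rw [Finsupp.lmapDomain_apply, Finsupp.mapDomain_single]]
  erw [show (psi N F FQ hFQ hiso M σ).app (op ((quotOrbitFunctor F N FQ hFQ).obj V.unop))
        (Finsupp.single (liftHom N V.unop.1 φ) b)
      = b • canVal N F FQ hFQ hiso M σ ((quotOrbitFunctor F N FQ hFQ).obj V.unop)
          (liftHom N V.unop.1 φ) from lift_single _ _ _]
  have hkey := key N F FQ hFQ hiso M σ ((quotOrbitFunctor F N FQ hFQ).obj V.unop)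
    (liftHom N V.unop.1 φ) V.unop φ (𝟙 ((quotOrbitFunctor F N FQ hFQ).obj V.unop))
    (MulActionHom.comp_id _)
  rw [op_id, M.map_id] at hkey
  rw [← hkey]
  rw [show Finsupp.single φ b = b • Finsupp.single φ (1 : R) by
    rw [Finsupp.smul_single', mul_one]]
  erw [map_smul]
  rfl

lemma psi_theta (M : OrbitMod R F) (τ : gsetMod R F (InflatedSet N X) ⟶ M) :
    psi N F FQ hFQ hiso M (theta N F FQ hFQ M τ) = τ := by
  apply NatTrans.ext
  funext V
  apply ModuleCat.hom_ext
  apply Finsupp.lhom_ext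
  intro ψ b
  show Finsupp.lift (M.obj (op V.unop)) R _
      (fun ψ => canVal N F FQ hFQ hiso M (theta N F FQ hFQ M τ) V.unop ψ)
      (Finsupp.single ψ b) = τ.app V (Finsupp.single ψ b)
  rw [lift_single]
  rw [show canVal N F FQ hFQ hiso M (theta N F FQ hFQ M τ) V.unop ψ
      = M.map (canHom N F FQ hFQ hiso V.unop ψ).op
          (τ.app (op ((quotOrbitFunctor F N FQ hFQ).obj
              (stabObj N FQ hiso (basePt N V.unop.1 ψ))))
            (Finsupp.lmapDomain R R (liftHom N (stabObj N FQ hiso (basePt N V.unop.1 ψ)).1)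
              (Finsupp.single (orbitMapOf N (basePt N V.unop.1 ψ)) 1))) from rfl]
  rw [show Finsupp.lmapDomain R R (liftHom N (stabObj N FQ hiso (basePt N V.unop.1 ψ)).1)
        (Finsupp.single (orbitMapOf N (basePt N V.unop.1 ψ)) (1 : R))
      = Finsupp.single (liftHom N (stabObj N FQ hiso (basePt N V.unop.1 ψ)).1 (orbitMapOf N (basePt N V.unop.1 ψ))) 1 by
    rw [Finsupp.lmapDomain_apply]; exact Finsupp.mapDomain_single]
  have hτ := congrArg (fun (t : (gsetMod R F (InflatedSet N X)).obj
        (op ((quotOrbitFunctor F N FQ hFQ).obj (stabObj N FQ hiso (basePt N V.unop.1 ψ)))) ⟶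
        M.obj (op V.unop)) =>
      t (Finsupp.single (liftHom N (stabObj N FQ hiso (basePt N V.unop.1 ψ)).1 (orbitMapOf N (basePt N V.unop.1 ψ))) 1))
    (τ.naturality (canHom N F FQ hFQ hiso V.unop ψ).op)
  erw [show M.map (canHom N F FQ hFQ hiso V.unop ψ).op
        (τ.app (op ((quotOrbitFunctor F N FQ hFQ).obj
            (stabObj N FQ hiso (basePt N V.unop.1 ψ))))
          (Finsupp.single (liftHom N (stabObj N FQ hiso (basePt N V.unop.1 ψ)).1 (orbitMapOf N (basePt N V.unop.1 ψ))) 1))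
      = τ.app (op V.unop)
          ((gsetMod R F (InflatedSet N X)).map (canHom N F FQ hFQ hiso V.unop ψ).op
            (Finsupp.single (liftHom N (stabObj N FQ hiso (basePt N V.unop.1 ψ)).1 (orbitMapOf N (basePt N V.unop.1 ψ))) 1)) from hτ.symm]
  erw [gsetMod_map_single]
  erw [show (liftHom N (stabObj N FQ hiso (basePt N V.unop.1 ψ)).1 (orbitMapOf N (basePt N V.unop.1 ψ))).comp
        ((canHom N F FQ hFQ hiso V.unop ψ).op.unop)
      = ψ from canMap_factor N V.unop.1 ψ]
  rw [show Finsupp.single ψ b = b • Finsupp.single ψ (1 : R) by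
    rw [Finsupp.smul_single', mul_one]]
  erw [map_smul]

end S5e


/-- [HPY 2014, Lemma on inflation].  Let `N ⊴ G` with `N ∈ 𝓕`,
and let `X` be a finite `G/N`-set with isotropy in `𝓕_{G/N}`.  Then the
inflation `Inf^G_{G/N}` (the left adjoint of the deflation/restriction functor
`Def^G_{G/N}`) satisfies `Inf^G_{G/N} R[X] ≅ R[Inf^G_{G/N} X]`. -/
theorem statement5 (G R : Type) [Group G] [Finite G] [CommRing R]
    (F : SubgroupFamily G) (N : Subgroup G) [N.Normal] (hNF : F.mem N)
    (FQ : SubgroupFamily (G ⧸ N))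
    (hFQ : ∀ Kb : Subgroup (G ⧸ N), FQ.mem Kb ↔ F.mem (Kb.comap (QuotientGroup.mk' N)))
    (X : Type) [Finite X] [MulAction (G ⧸ N) X]
    (hiso : ∀ x : X, FQ.mem (MulAction.stabilizer (G ⧸ N) x))
    (Inf : OrbitMod R FQ ⥤ OrbitMod R F)
    (adj : Inf ⊣ defMod R F N FQ hFQ) :
    Nonempty (Inf.obj (gsetMod R FQ X) ≅ gsetMod R F (InflatedSet N X)) := by
  let β : coyoneda.obj (op (gsetMod R F (InflatedSet N X))) ⟶
      coyoneda.obj (op (Inf.obj (gsetMod R FQ X))) :=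
    { app := fun M => TypeCat.ofHom (fun τ => (adj.homEquiv (gsetMod R FQ X) M).symm (theta N F FQ hFQ M τ))
      naturality := by
        intro M M' g
        refine ConcreteCategory.hom_ext _ _ (fun τ => ?_)
        show (adj.homEquiv (gsetMod R FQ X) M').symm (theta N F FQ hFQ M' (τ ≫ g))
          = (adj.homEquiv (gsetMod R FQ X) M).symm (theta N F FQ hFQ M τ) ≫ g
        rw [theta_natural]
        exact adj.homEquiv_naturality_right_symm _ _ }
  have hbij : ∀ M : OrbitMod R F, Function.Bijective (β.app M) := by
    intro M
    have h1 : Function.Bijective (theta N F FQ hFQ M (X := X)) := by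
      apply Function.bijective_iff_has_inverse.mpr
      exact ⟨psi N F FQ hFQ hiso M, fun τ => psi_theta N F FQ hFQ hiso M τ,
        fun σ => theta_psi N F FQ hFQ hiso M σ⟩
    exact ((adj.homEquiv (gsetMod R FQ X) M).symm.bijective).comp h1
  haveI : ∀ M : OrbitMod R F, IsIso (β.app M) := fun M =>
    (CategoryTheory.isIso_iff_bijective _).mpr (hbij M)
  haveI : IsIso β := NatIso.isIso_of_isIso_app β
  exact ⟨(coyoneda.preimageIso (asIso β)).unop⟩
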